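/- Let U be a k-dimensional Sidon space in F_{q^n} (meaning: whenever a,b,c,d ∈ U∖0 satisfy ab = cd, then {aF_q^*, bF_q^*} = {cF_q^*, dF_q^*}) with 2 ≤ k ≤ n/2. Then the number of α F_q^*-classes in F_{q^n}^* with dim_{F_q}(U ∩ αU) = 1 equals ((q^k−1)/(q−1))·((q^k−q)/(q−1)). -/

import Mathlib

open scoped LinearAlgebra.Projectivization
open Projectivization

-- cardinality of projectivization
lemma card_proj (F : Type) [Field F] [Fintype F] (V : Type) [AddCommGroup V] [Module F V]
    [Fintype V] : Nat.card (ℙ F V) * (Fintype.card F - 1) = Fintype.card V - 1 := by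
  classical
  have hfin : Finite (ℙ F V) := Quotient.finite _
  -- equiv (ℙ F V) × Fˣ ≃ {v : V // v ≠ 0}
  have e : (ℙ F V) × Fˣ ≃ {v : V // v ≠ 0} := by
    refine Equiv.ofBijective (fun p => ⟨(p.2 : F) • p.1.rep, ?_⟩) ⟨?_, ?_⟩
    · exact smul_ne_zero (Units.ne_zero p.2) (rep_nonzero p.1)
    · rintro ⟨x, c⟩ ⟨y, d⟩ h
      simp only [Subtype.mk.injEq] at h
      have hx : x = y := by
        have h1 : mk F ((c : F) • x.rep) (smul_ne_zero (Units.ne_zero c) (rep_nonzero x))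
            = mk F x.rep (rep_nonzero x) := by
          rw [mk_eq_mk_iff]; exact ⟨c, rfl⟩
        have h2 : mk F ((d : F) • y.rep) (smul_ne_zero (Units.ne_zero d) (rep_nonzero y))
            = mk F y.rep (rep_nonzero y) := by
          rw [mk_eq_mk_iff]; exact ⟨d, rfl⟩
        have h3 : mk F ((c : F) • x.rep) (smul_ne_zero (Units.ne_zero c) (rep_nonzero x))
            = mk F ((d : F) • y.rep) (smul_ne_zero (Units.ne_zero d) (rep_nonzero y)) := by
          congr 1
        rw [h1, h2, mk_rep, mk_rep] at h3; exact h3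
      subst hx
      have : (c : F) = (d : F) := by
        have := smul_left_injective F (m := x.rep) (rep_nonzero x) h
        exact this
      have : c = d := Units.ext this
      rw [this]
    · rintro ⟨v, hv⟩
      obtain ⟨a, ha⟩ := (mk_eq_mk_iff F _ v (rep_nonzero (mk F v hv)) hv).mp (mk_rep (mk F v hv))
      refine ⟨(mk F v hv, a⁻¹), ?_⟩
      simp only [Subtype.mk.injEq]
      rw [← ha]
      exact inv_smul_smul a v
  have h1 : Nat.card ((ℙ F V) × Fˣ) = Nat.card {v : V // v ≠ 0} := Nat.card_congr e
  rw [Nat.card_prod] at h1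
  have h2 : Nat.card Fˣ = Fintype.card F - 1 := by
    rw [Nat.card_eq_fintype_card, Fintype.card_units]
  have h3 : Nat.card {v : V // v ≠ 0} = Fintype.card V - 1 := by
    rw [Nat.card_eq_fintype_card]
    have := Fintype.card_subtype_compl (α := V) (p := fun v => v = 0)
    simp only [Fintype.card_subtype_eq] at this
    convert this using 2
  rw [h2, h3] at h1; exact h1

theorem stmt_8 (F K : Type) [Field F] [Field K] [Algebra F K]
    [Fintype F] [Fintype K] (q n k : ℕ)
    (hq : Fintype.card F = q) (hn : Module.finrank F K = n)
    (hk2 : 2 ≤ k) (hkn : 2 * k ≤ n)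
    (U : Submodule F K) (hk : Module.finrank F U = k)
    (hSidon : ∀ a b c d : K, a ∈ U → b ∈ U → c ∈ U → d ∈ U →
      a ≠ 0 → b ≠ 0 → c ≠ 0 → d ≠ 0 → a * b = c * d →
      ((∃ μ : F, μ ≠ 0 ∧ a = μ • c) ∧ (∃ ν : F, ν ≠ 0 ∧ b = ν • d)) ∨
      ((∃ μ : F, μ ≠ 0 ∧ a = μ • d) ∧ (∃ ν : F, ν ≠ 0 ∧ b = ν • c))) :
    Nat.card {W : Submodule F K //
        ∃ α : K, α ≠ 0 ∧ W = Submodule.span F {α} ∧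
          Module.finrank F ↥(U ⊓ Submodule.map (LinearMap.mulLeft F α) U) = 1}
      = (q ^ k - 1) / (q - 1) * ((q ^ k - q) / (q - 1)) := by
  classical
  have hq2 : 2 ≤ q := hq ▸ Fintype.one_lt_card
  -- `algebraMap` scalars act as smul
  have hsm : ∀ (μ : F) (x : K), algebraMap F K μ * x = μ • x := fun μ x =>
    (Algebra.smul_def μ x).symm
  -- stabilizer facts
  have stab : ∀ μ : F, μ ≠ 0 →
      Submodule.map (LinearMap.mulLeft F ((algebraMap F K) μ)) U = U := by
    intro μ hμ
    apply le_antisymm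
    · rintro x ⟨y, hy, rfl⟩
      simpa [LinearMap.mulLeft_apply, hsm] using U.smul_mem μ hy
    · intro y hy
      refine ⟨μ⁻¹ • y, U.smul_mem _ hy, ?_⟩
      simp only [LinearMap.mulLeft_apply, hsm, smul_smul]
      rw [mul_inv_cancel₀ hμ, one_smul]
  -- key dimension lemma
  have key : ∀ u v : K, u ∈ U → v ∈ U → u ≠ 0 → v ≠ 0 → (∀ μ : F, u ≠ μ • v) →
      Module.finrank F ↥(U ⊓ Submodule.map (LinearMap.mulLeft F (u * v⁻¹)) U) = 1 := by
    intro u v huU hvU hu0 hv0 hind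
    set α := u * v⁻¹ with hα
    have hαv : α * v = u := by rw [hα, mul_assoc, inv_mul_cancel₀ hv0, mul_one]
    have hu_mem : u ∈ U ⊓ Submodule.map (LinearMap.mulLeft F α) U :=
      ⟨huU, ⟨v, hvU, by simpa [LinearMap.mulLeft_apply] using hαv⟩⟩
    have hle : U ⊓ Submodule.map (LinearMap.mulLeft F α) U ≤ Submodule.span F {u} := by
      rintro x ⟨hxU, u₁, hu₁U, hx⟩
      simp only [LinearMap.mulLeft_apply] at hx
      by_cases hx0 : x = 0
      · simp [hx0]
      have hu₁0 : u₁ ≠ 0 := by rintro rfl; rw [mul_zero] at hx; exact hx0 hx.symm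
      have hmul : x * v = u * u₁ := by rw [← hx, ← hαv]; ring
      rcases hSidon x v u u₁ hxU hvU huU hu₁U hx0 hv0 hu0 hu₁0 hmul with
        ⟨⟨μ, hμ, hxμ⟩, _⟩ | ⟨⟨μ, hμ, hxμ⟩, _⟩
      · exact Submodule.mem_span_singleton.mpr ⟨μ, hxμ.symm⟩
      · exfalso
        have h1 : α * u₁ = algebraMap F K μ * u₁ := by rw [hx, hxμ, hsm]
        have hαeq : α = algebraMap F K μ := mul_right_cancel₀ hu₁0 h1
        exact hind μ (by rw [← hαv, hαeq, hsm])
    have h1le : Submodule.span F {u} ≤ U ⊓ Submodule.map (LinearMap.mulLeft F α) U :=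
      (Submodule.span_singleton_le_iff_mem _ _).mpr hu_mem
    refine le_antisymm ?_ ?_
    · calc Module.finrank F ↥(U ⊓ Submodule.map (LinearMap.mulLeft F α) U)
          ≤ Module.finrank F ↥(Submodule.span F {u}) := Submodule.finrank_mono hle
        _ = 1 := finrank_span_singleton hu0
    · calc 1 = Module.finrank F ↥(Submodule.span F {u}) := (finrank_span_singleton hu0).symm
        _ ≤ _ := Submodule.finrank_mono h1le
  -- projectivization of U
  set P := ℙ F ↥U with hP
  have hPfin : Finite P := Quotient.finite _
  haveI := Fintype.ofFinite P
  -- coercion nonzero helper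
  have hcoe : ∀ x : ↥U, x ≠ 0 → (x : K) ≠ 0 := by
    intro x hx h; exact hx (Subtype.ext h)
  -- from a K-level scalar relation to equality of projective points
  have mk_eq_of : ∀ (x y : ↥U) (hx : x ≠ 0) (hy : y ≠ 0) (c μ : F), c ≠ 0 →
      c • (x : K) = μ • (y : K) →
      Projectivization.mk F x hx = Projectivization.mk F y hy := by
    intro x y hx hy c μ hc h
    rw [mk_eq_mk_iff']
    refine ⟨c⁻¹ * μ, Subtype.ext ?_⟩
    push_cast
    rw [mul_smul, ← h, smul_smul, inv_mul_cancel₀ hc, one_smul]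
  -- the bijection
  let S := {W : Submodule F K //
      ∃ α : K, α ≠ 0 ∧ W = Submodule.span F {α} ∧
        Module.finrank F ↥(U ⊓ Submodule.map (LinearMap.mulLeft F α) U) = 1}
  have repne : ∀ p : {p : P × P // p.1 ≠ p.2}, ∀ μ : F,
      (p.1.1.rep : K) ≠ μ • (p.1.2.rep : K) := by
    intro p μ h
    exact p.2 (by
      rw [← mk_rep p.1.1, ← mk_rep p.1.2]
      exact mk_eq_of _ _ _ _ 1 μ one_ne_zero (by rw [one_smul, h]))
  have rep10 : ∀ p : {p : P × P // p.1 ≠ p.2}, (p.1.1.rep : K) ≠ 0 :=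
    fun p => hcoe _ (rep_nonzero p.1.1)
  have rep20 : ∀ p : {p : P × P // p.1 ≠ p.2}, (p.1.2.rep : K) ≠ 0 :=
    fun p => hcoe _ (rep_nonzero p.1.2)
  let f : {p : P × P // p.1 ≠ p.2} → S := fun p =>
    ⟨Submodule.span F {(p.1.1.rep : K) * (p.1.2.rep : K)⁻¹},
      (p.1.1.rep : K) * (p.1.2.rep : K)⁻¹,
      mul_ne_zero (rep10 p) (inv_ne_zero (rep20 p)), rfl,
      key _ _ p.1.1.rep.2 p.1.2.rep.2 (rep10 p) (rep20 p) (repne p)⟩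
  have hf : Function.Bijective f := by
    constructor
    · rintro p p' hpp'
      have hspan : Submodule.span F {(p.1.1.rep : K) * (p.1.2.rep : K)⁻¹}
          = Submodule.span F {(p'.1.1.rep : K) * (p'.1.2.rep : K)⁻¹} :=
        congrArg Subtype.val hpp'
      obtain ⟨z, hz⟩ := Submodule.span_singleton_eq_span_singleton.mp hspan
      set u := (p.1.1.rep : K); set v := (p.1.2.rep : K)
      set u' := (p'.1.1.rep : K); set v' := (p'.1.2.rep : K)
      have hv0 : v ≠ 0 := rep20 p
      have hv'0 : v' ≠ 0 := rep20 p'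
      have hz' : ((z : F) • u) * v' = u' * v := by
        obtain ⟨X, hX⟩ : ∃ X, X = (z : F) • u := ⟨_, rfl⟩
        rw [← hX]
        have h1 : X * v⁻¹ = u' * v'⁻¹ := by rw [hX, smul_mul_assoc]; exact hz
        field_simp at h1
        linear_combination h1
      have hzu_mem : (z : F) • u ∈ U := U.smul_mem _ p.1.1.rep.2
      have hzu0 : (z : F) • u ≠ 0 := smul_ne_zero (Units.ne_zero z) (rep10 p)
      rcases hSidon ((z : F) • u) v' u' v hzu_mem p'.1.2.rep.2 p'.1.1.rep.2 p.1.2.rep.2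
          hzu0 (rep20 p') (rep10 p') (rep20 p) hz' with
        ⟨⟨μ, hμ, h1⟩, ⟨ν, hν, h2⟩⟩ | ⟨⟨μ, hμ, h1⟩, _⟩
      · have e1 : p.1.1 = p'.1.1 := by
          rw [← mk_rep p.1.1, ← mk_rep p'.1.1]
          exact mk_eq_of _ _ _ _ (z : F) μ (Units.ne_zero z) h1
        have e2 : p'.1.2 = p.1.2 := by
          rw [← mk_rep p'.1.2, ← mk_rep p.1.2]
          exact mk_eq_of _ _ _ _ 1 ν one_ne_zero (by rw [one_smul]; exact h2)
        exact Subtype.ext (Prod.ext e1 e2.symm)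
      · exfalso
        apply p.2
        rw [← mk_rep p.1.1, ← mk_rep p.1.2]
        exact mk_eq_of _ _ _ _ (z : F) μ (Units.ne_zero z) h1
    · rintro ⟨W, α, hα0, hWspan, hdim⟩
      -- find a nonzero element of the intersection
      have hex : ∃ w : K, w ∈ U ⊓ Submodule.map (LinearMap.mulLeft F α) U ∧ w ≠ 0 := by
        by_contra h
        push_neg at h
        have hbot : U ⊓ Submodule.map (LinearMap.mulLeft F α) U = ⊥ := by
          rw [Submodule.eq_bot_iff]; intro x hx
          by_contra hx0; exact hx0 (h x hx)
        rw [hbot, finrank_bot] at hdim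
        exact one_ne_zero hdim.symm
      obtain ⟨w, ⟨hwU, u, huU, hu⟩, hw0⟩ := hex
      simp only [LinearMap.mulLeft_apply] at hu
      have hu0 : u ≠ 0 := by rintro rfl; rw [mul_zero] at hu; exact hw0 hu.symm
      have hαwu : α = w * u⁻¹ := by rw [← hu, mul_assoc, mul_inv_cancel₀ hu0, mul_one]
      have hw' : (⟨w, hwU⟩ : ↥U) ≠ 0 := fun h => hw0 (congrArg Subtype.val h)
      have hu' : (⟨u, huU⟩ : ↥U) ≠ 0 := fun h => hu0 (congrArg Subtype.val h)
      set x := Projectivization.mk F (⟨w, hwU⟩ : ↥U) hw' with hx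
      set y := Projectivization.mk F (⟨u, huU⟩ : ↥U) hu' with hy
      have hne : x ≠ y := by
        intro hmk
        rw [hx, hy, mk_eq_mk_iff'] at hmk
        obtain ⟨a, ha⟩ := hmk
        have ha' : a • u = w := congrArg Subtype.val ha
        have ha0 : a ≠ 0 := by rintro rfl; rw [zero_smul] at ha'; exact hw0 ha'.symm
        have hαa : α = algebraMap F K a := by
          have : α * u = algebraMap F K a * u := by rw [hu, ← ha', hsm]
          exact mul_right_cancel₀ hu0 this
        rw [hαa, stab a ha0, inf_idem] at hdim
        rw [hk] at hdim; omega
      refine ⟨⟨(x, y), hne⟩, ?_⟩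
      apply Subtype.ext
      show Submodule.span F {(x.rep : K) * (y.rep : K)⁻¹} = W
      rw [hWspan]
      obtain ⟨a, ha⟩ := (mk_eq_mk_iff F x.rep ⟨w, hwU⟩ (rep_nonzero x) hw').mp
        (by rw [mk_rep, hx])
      obtain ⟨b, hb⟩ := (mk_eq_mk_iff F y.rep ⟨u, huU⟩ (rep_nonzero y) hu').mp
        (by rw [mk_rep, hy])
      have ha' : (x.rep : K) = (a : F) • w := by rw [← ha]; rfl
      have hb' : (y.rep : K) = (b : F) • u := by rw [← hb]; rfl
      rw [Submodule.span_singleton_eq_span_singleton]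
      refine ⟨a⁻¹ * b, ?_⟩
      rw [ha', hb', hαwu]
      have ha0 : (a : F) ≠ 0 := Units.ne_zero a
      have hb0 : (b : F) ≠ 0 := Units.ne_zero b
      rw [Units.smul_def, Algebra.smul_def, Algebra.smul_def, Algebra.smul_def]
      rw [Units.val_mul, map_mul]
      have h1 : ((a⁻¹ : Fˣ) : F) = (a : F)⁻¹ := Units.val_inv_eq_inv_val a
      have h2 : algebraMap F K ((a : F)⁻¹) = (algebraMap F K (a : F))⁻¹ := map_inv₀ _ _
      have h3 : algebraMap F K (a : F) ≠ 0 := by simp [ha0]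
      have h4 : algebraMap F K (b : F) ≠ 0 := by simp [hb0]
      rw [h1, h2]
      field_simp
  -- cardinality computation
  have hcard1 : Nat.card S = Nat.card {p : P × P // p.1 ≠ p.2} :=
    (Nat.card_congr (Equiv.ofBijective f hf)).symm
  set N := Nat.card P with hN
  haveI : Fintype {p : P × P // p.1 = p.2} := Fintype.ofFinite _
  haveI : Fintype {p : P × P // ¬ p.1 = p.2} := Fintype.ofFinite _
  have hdiag : Fintype.card {p : P × P // p.1 = p.2} = Fintype.card P := by
    refine Fintype.card_congr ⟨fun p => p.1.1, fun x => ⟨(x, x), rfl⟩, ?_, ?_⟩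
    · rintro ⟨⟨x, y⟩, h⟩; cases h; rfl
    · intro x; rfl
  have e0 : {p : P × P // p.1 ≠ p.2} ≃ {p : P × P // ¬ p.1 = p.2} := Equiv.refl _
  have hoff : Nat.card {p : P × P // p.1 ≠ p.2} = N * N - N := by
    rw [Nat.card_congr e0, Nat.card_eq_fintype_card]
    have h := Fintype.card_subtype_compl (α := P × P) (fun p => p.1 = p.2)
    rw [hdiag, Fintype.card_prod] at h
    rw [h, hN, Nat.card_eq_fintype_card]
  -- N in terms of q, k
  have hcardU : Fintype.card ↥U = q ^ k := by
    rw [Module.card_eq_pow_finrank (K := F) (V := ↥U), hq, hk]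
  have hNq : N * (q - 1) = q ^ k - 1 := by
    have := card_proj F ↥U
    rw [hq, hcardU] at this
    exact this
  have hqk : q ≤ q ^ k := Nat.le_self_pow (by omega) q
  have hN1 : 1 ≤ N := by
    rcases Nat.eq_zero_or_pos N with h | h
    · rw [h, zero_mul] at hNq; omega
    · exact h
  have hdiv1 : (q ^ k - 1) / (q - 1) = N :=
    Nat.div_eq_of_eq_mul_left (by omega) hNq.symm
  have hsub : (N - 1) * (q - 1) = q ^ k - q := by
    rw [Nat.sub_mul, hNq, one_mul]; omega
  have hdiv2 : (q ^ k - q) / (q - 1) = N - 1 :=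
    Nat.div_eq_of_eq_mul_left (by omega) hsub.symm
  rw [hdiv1, hdiv2, hcard1, hoff, Nat.mul_sub, mul_one]
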